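/- Let u be a twice continuously differentiable function on R^n and x a point. Let V = {v_1,...,v_k} be unit vectors with directional resolution dθ = max_{|w|=1} min_i arccos(w·v_i) ≤ π/4. If the second directional derivatives satisfy d²u/dv_i² ≥ 0 at x for all i, then the eigenvalues λ_1 ≤ ... ≤ λ_n of the Hessian of u at x satisfy λ_1/λ_n ≥ -tan²(dθ) (assuming λ_n > 0). -/

import Mathlib

open Matrix Real

set_option maxHeartbeats 1000000 in
/-- If a C² function has nonnegative second directional derivatives at `x` in a set of
unit directions with directional resolution `dθ ≤ π/4`, then the extreme eigenvalues
`λ1 ≤ λn` of the Hessian `H` of `u` at `x` satisfy `λ1/λn ≥ -tan²(dθ)` (assuming `λn > 0`). -/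
theorem stmt_0 (n k : ℕ) (u : (Fin n → ℝ) → ℝ) (hu : ContDiff ℝ 2 u)
    (x : Fin n → ℝ) (V : Fin k → (Fin n → ℝ)) (hV : ∀ i, V i ⬝ᵥ V i = 1)
    (dθ : ℝ) (hdθ0 : 0 ≤ dθ) (hdθ : dθ ≤ π / 4)
    (hres : ∀ w : Fin n → ℝ, w ⬝ᵥ w = 1 → ∃ i, Real.arccos (w ⬝ᵥ V i) ≤ dθ)
    (H : Matrix (Fin n) (Fin n) ℝ) (hH : H.IsSymm)
    (hHess : ∀ v : Fin n → ℝ, iteratedDeriv 2 (fun t : ℝ => u (x + t • v)) 0 = v ⬝ᵥ H.mulVec v)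
    (hpos : ∀ i, 0 ≤ iteratedDeriv 2 (fun t : ℝ => u (x + t • V i)) 0)
    (lam1 lamn : ℝ)
    (hlam1 : (∃ w : Fin n → ℝ, w ⬝ᵥ w = 1 ∧ H.mulVec w = lam1 • w) ∧
      ∀ w : Fin n → ℝ, w ⬝ᵥ w = 1 → lam1 ≤ w ⬝ᵥ H.mulVec w)
    (hlamn : (∃ w : Fin n → ℝ, w ⬝ᵥ w = 1 ∧ H.mulVec w = lamn • w) ∧
      ∀ w : Fin n → ℝ, w ⬝ᵥ w = 1 → w ⬝ᵥ H.mulVec w ≤ lamn)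
    (hlamnpos : 0 < lamn) :
    -Real.tan dθ ^ 2 ≤ lam1 / lamn := by
  obtain ⟨⟨w1, hw1n, hw1e⟩, -⟩ := hlam1
  obtain ⟨i, hi⟩ := hres w1 hw1n
  set c : ℝ := w1 ⬝ᵥ V i with hc
  -- Cauchy–Schwarz: c² ≤ 1
  have hcs : c ^ 2 ≤ 1 := by
    have h := Finset.sum_mul_sq_le_sq_mul_sq Finset.univ w1 (V i)
    have e1 : w1 ⬝ᵥ w1 = ∑ j, w1 j ^ 2 := by simp [dotProduct, sq]
    have e2 : V i ⬝ᵥ V i = ∑ j, V i j ^ 2 := by simp [dotProduct, sq]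
    calc c ^ 2 = (∑ j, w1 j * V i j) ^ 2 := by rw [hc]; rfl
      _ ≤ (∑ j, w1 j ^ 2) * ∑ j, V i j ^ 2 := h
      _ = 1 := by rw [← e1, ← e2, hw1n, hV i]; ring
  have hc1 : -1 ≤ c ∧ c ≤ 1 := ⟨by nlinarith, by nlinarith⟩
  have hcos : Real.cos dθ ≤ c := by
    have h1 : Real.cos dθ ≤ Real.cos (Real.arccos c) := by
      apply Real.cos_le_cos_of_nonneg_of_le_pi (Real.arccos_nonneg c) _ hi
      linarith [Real.pi_pos]
    rwa [Real.cos_arccos hc1.1 hc1.2] at h1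
  have hcdpos : 0 < Real.cos dθ := by
    apply Real.cos_pos_of_mem_Ioo
    constructor <;> [linarith [Real.pi_pos]; linarith [Real.pi_pos]]
  have hcpos : 0 < c := lt_of_lt_of_le hcdpos hcos
  -- symmetric bilinear form
  have hsymm : ∀ a b : Fin n → ℝ, a ⬝ᵥ H.mulVec b = b ⬝ᵥ H.mulVec a := by
    intro a b
    rw [Matrix.dotProduct_mulVec, ← Matrix.mulVec_transpose, hH, dotProduct_comm]
  set z : Fin n → ℝ := V i - c • w1 with hzdef
  have hzw1 : z ⬝ᵥ w1 = 0 := by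
    simp only [hzdef, sub_dotProduct, smul_dotProduct, smul_eq_mul, hw1n]
    rw [dotProduct_comm]
    ring
  have hzz : z ⬝ᵥ z = 1 - c ^ 2 := by
    simp only [hzdef, sub_dotProduct, dotProduct_sub, smul_dotProduct,
      dotProduct_smul, smul_eq_mul, hw1n, hV i]
    rw [dotProduct_comm (V i) w1]
    ring
  have hzznn : 0 ≤ 1 - c ^ 2 := by nlinarith
  -- bound z H z
  have hzHz : z ⬝ᵥ H.mulVec z ≤ (1 - c ^ 2) * lamn := by
    rcases eq_or_ne (1 - c ^ 2) 0 with h0 | h0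
    · have hz0 : z = 0 := by
        rw [← dotProduct_self_eq_zero (v := z), hzz, h0]
      simp [hz0, h0]
    · have hpos' : 0 < 1 - c ^ 2 := lt_of_le_of_ne hzznn (Ne.symm h0)
      set s : ℝ := Real.sqrt (1 - c ^ 2) with hs
      have hspos : 0 < s := Real.sqrt_pos.mpr hpos'
      have hs2 : s ^ 2 = 1 - c ^ 2 := Real.sq_sqrt hzznn
      have hun : (s⁻¹ • z) ⬝ᵥ (s⁻¹ • z) = 1 := by
        rw [smul_dotProduct, dotProduct_smul, hzz, smul_eq_mul, smul_eq_mul]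
        field_simp
        nlinarith
      have h2 := hlamn.2 _ hun
      rw [smul_dotProduct, Matrix.mulVec_smul, dotProduct_smul,
        smul_eq_mul, smul_eq_mul] at h2
      have : z ⬝ᵥ H.mulVec z ≤ s ^ 2 * lamn := by
        have hss : (0:ℝ) < s ^ 2 := by positivity
        calc z ⬝ᵥ H.mulVec z = s ^ 2 * (s⁻¹ * (s⁻¹ * (z ⬝ᵥ H.mulVec z))) := by
              field_simp
          _ ≤ s ^ 2 * lamn := by nlinarith
      rwa [hs2] at this
  -- expand V i ⬝ H (V i)
  have hVi : V i = c • w1 + z := by simp [hzdef]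
  have h0 : (0:ℝ) ≤ V i ⬝ᵥ H.mulVec (V i) := by rw [← hHess (V i)]; exact hpos i
  have hw1Hw1 : w1 ⬝ᵥ H.mulVec w1 = lam1 := by
    rw [hw1e, dotProduct_smul, smul_eq_mul, hw1n, mul_one]
  have hzHw1 : z ⬝ᵥ H.mulVec w1 = 0 := by
    rw [hw1e, dotProduct_smul, smul_eq_mul, hzw1, mul_zero]
  have hw1Hz : w1 ⬝ᵥ H.mulVec z = 0 := by rw [hsymm, hzHw1]
  have hexp : V i ⬝ᵥ H.mulVec (V i) = c ^ 2 * lam1 + z ⬝ᵥ H.mulVec z := by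
    rw [hVi]
    rw [Matrix.mulVec_add, Matrix.mulVec_smul, add_dotProduct,
      smul_dotProduct, dotProduct_add, dotProduct_add,
      dotProduct_smul, dotProduct_smul]
    simp only [smul_eq_mul, hw1Hw1, hzHw1, hw1Hz]
    ring
  have hkey : 0 ≤ c ^ 2 * lam1 + (1 - c ^ 2) * lamn := by
    rw [hexp] at h0; nlinarith
  -- finish
  rw [neg_le, ← neg_div, div_le_iff₀ hlamnpos]
  have htan : Real.tan dθ ^ 2 * Real.cos dθ ^ 2 = 1 - Real.cos dθ ^ 2 := by
    rw [Real.tan_eq_sin_div_cos]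
    field_simp
    nlinarith [Real.sin_sq_add_cos_sq dθ]
  nlinarith [sq_nonneg (Real.tan dθ), mul_pos hcdpos hcpos, sq_nonneg (c - Real.cos dθ),
    mul_nonneg (sq_nonneg (Real.tan dθ)) hlamnpos.le,
    mul_le_mul_of_nonneg_right hcos hcdpos.le]
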